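/- Let A be a normed ring, H, P : ℝ → A twice differentiable, μ : ℝ → ℂ twice differentiable, with H(t)P(t) = μ(t)P(t), P(t)H(t) = μ(t)P(t), and P(t)² = P(t) for all t. Then for all t: 2·P(t)·H'(t)·P'(t)·P(t) = μ''(t)·P(t) − P(t)·H''(t)·P(t). -/

import Mathlib

lemma aux15 {E : Type*} [NormedAddCommGroup E] [NormedSpace ℝ E] {f : ℝ → E}
    (h : ContDiff ℝ 2 f) : Differentiable ℝ f ∧ Differentiable ℝ (deriv f) := by
  have h1 : ContDiff ℝ 1 (deriv f) := by
    exact_mod_cast (contDiff_succ_iff_deriv.mp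
      (by exact_mod_cast h : ContDiff ℝ ((1:ℕ)+1 : ℕ) f)).2.2
  exact ⟨h.differentiable (by norm_num), h1.differentiable one_ne_zero⟩

theorem stmt15 {A : Type*} [NormedRing A] [NormedAlgebra ℂ A]
    (H P : ℝ → A) (μ : ℝ → ℂ)
    (hH : ContDiff ℝ 2 H) (hP : ContDiff ℝ 2 P) (hμ : ContDiff ℝ 2 μ)
    (heig : ∀ t, H t * P t = μ t • P t)
    (heig' : ∀ t, P t * H t = μ t • P t)
    (hidem : ∀ t, P t * P t = P t) :
    ∀ t, 2 * (P t * deriv H t * deriv P t * P t) =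
      deriv (deriv μ) t • P t - P t * deriv (deriv H) t * P t := by
  obtain ⟨hHd, hHd'⟩ := aux15 hH
  obtain ⟨hPd, hPd'⟩ := aux15 hP
  obtain ⟨hμd, hμd'⟩ := aux15 hμ
  intro t
  have E1 : (fun t => deriv H t * P t + H t * deriv P t)
      = (fun t => μ t • deriv P t + deriv μ t • P t) := by
    funext s
    calc deriv H s * P s + H s * deriv P s
        = deriv (fun u => H u * P u) s := (deriv_mul (hHd s) (hPd s)).symm
      _ = deriv (fun u => μ u • P u) s := by
            congr 1; funext u; exact heig u
      _ = μ s • deriv P s + deriv μ s • P s := deriv_smul (hμd s) (hPd s)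
  have E2 : deriv (deriv H) t * P t + deriv H t * deriv P t
      + (deriv H t * deriv P t + H t * deriv (deriv P) t)
      = μ t • deriv (deriv P) t + deriv μ t • deriv P t
      + (deriv μ t • deriv P t + deriv (deriv μ) t • P t) := by
    have h := congrArg (fun f => deriv f t) E1
    rw [deriv_fun_add (f := fun t => deriv H t * P t) (g := fun t => H t * deriv P t) ((hHd'.mul hPd) t) ((hHd.mul hPd') t),
        deriv_fun_mul (hHd' t) (hPd t), deriv_fun_mul (hHd t) (hPd' t),
        deriv_fun_add (f := fun t => μ t • deriv P t) (g := fun t => deriv μ t • P t) ((hμd.smul hPd') t) ((hμd'.smul hPd) t),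
        deriv_fun_smul (hμd t) (hPd' t), deriv_fun_smul (hμd' t) (hPd t)] at h
    exact h
  set p := P t; set p' := deriv P t; set p'' := deriv (deriv P) t
  set h := H t; set h' := deriv H t; set h'' := deriv (deriv H) t
  set m := μ t; set m' := deriv μ t; set m'' := deriv (deriv μ) t
  have hid : p * p = p := hidem t
  have hpp : ∀ x : A, p * (p * x) = p * x := fun x => by
    rw [← mul_assoc, hid]
  have hph : ∀ x : A, p * (h * x) = m • (p * x) := fun x => by
    rw [← mul_assoc, heig' t, smul_mul_assoc]
  have E1p : p' * p + p * p' = p' := by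
    calc p' * p + p * p'
        = deriv (fun u => P u * P u) t := (deriv_mul (hPd t) (hPd t)).symm
      _ = p' := by congr 1; funext u; exact hidem u

  have key : p * (p' * p) = 0 := by
    have h2 := congrArg (fun x => p * (x * p)) E1p
    simp only [add_mul, mul_add, mul_assoc, hid, hpp] at h2
    exact right_eq_add.mp h2.symm
  have h2 := congrArg (fun x => p * (x * p)) E2
  simp only [add_mul, mul_add, mul_assoc, smul_mul_assoc, mul_smul_comm,
    hid, hpp, hph, key, smul_zero, add_zero, zero_add] at h2
  rw [two_mul, eq_sub_iff_add_eq, mul_assoc, mul_assoc, mul_assoc]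
  exact add_right_cancel (b := m • (p * (p'' * p))) (by abel_nf at h2 ⊢; exact h2)
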